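/- Let k ≥ 2 be an integer and let Q, q be reals with 0 < Q < 1 and Q < q < min{1, kQ}, and let y ∈ (0,1) be the unique root of q = Q(1−y^k)/(1−y). Consider functions ρ : {0,1}^k → (0,1) satisfying the constraints Σ_{u ∈ {0,1}^k} ρ(u) = 1, ρ(0…0) = 1−q, and Σ_{u : u_i = 1} ρ(u) = Q for every i ∈ {1,…,k}, and define F(ρ) := Σ_{u ∈ {0,1}^k} ρ(u)·log₂ρ(u) + k·h(Q). Then the function ρ* given by ρ*(0…0) = 1−q and ρ*(u) = (Q/(1−y))·(1−y)^{w(u)}·y^{k−w(u)} for u ≠ 0…0 (w(u) denoting the Hamming weight of u) satisfies all the constraints, F(ρ*) = A(k,Q,q), and F(ρ) ≥ A(k,Q,q) for every ρ satisfying the constraints, with equality only for ρ = ρ*. -/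

import Mathlib

/-- `y(k,Q,q)`: the unique root `y ∈ (0,1)` of `q = Q(1−y^k)/(1−y)` (realized as the
supremum of the solution set, which is a singleton in the considered range). -/
noncomputable def rootY (k : ℕ) (Q q : ℝ) : ℝ :=
  sSup {y : ℝ | y ∈ Set.Ioo (0 : ℝ) 1 ∧ q = Q * (1 - y ^ k) / (1 - y)}

/-- Binary entropy `h(Q) = −Q log₂ Q − (1−Q) log₂(1−Q)`. -/
noncomputable def binH (Q : ℝ) : ℝ :=
  -Q * Real.logb 2 Q - (1 - Q) * Real.logb 2 (1 - Q)

/-- `A(k,Q,q) = (1−q)log₂(1−q) + q log₂[Q y^k/(1−y)] + kQ log₂[(1−y)/y] + k·h(Q)`,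
where `y = y(k,Q,q)` is the unique root of `q = Q(1−y^k)/(1−y)` in `(0,1)`. -/
noncomputable def funA (k : ℕ) (Q q : ℝ) : ℝ :=
  (1 - q) * Real.logb 2 (1 - q)
    + q * Real.logb 2 (Q * rootY k Q q ^ k / (1 - rootY k Q q))
    + (k : ℝ) * Q * Real.logb 2 ((1 - rootY k Q q) / rootY k Q q)
    + (k : ℝ) * binH Q

/-- Hamming weight of a binary vector. -/
def wt {k : ℕ} (u : Fin k → Bool) : ℕ :=
  (Finset.univ.filter fun i => u i = true).card

open Finset Real

lemma rootY_spec (k : ℕ) (hk : 2 ≤ k) (Q q : ℝ) (hQ0 : 0 < Q)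
    (h1 : Q < q) (h2k : q < (k : ℝ) * Q) :
    rootY k Q q ∈ Set.Ioo (0:ℝ) 1 ∧
    q = Q * (1 - (rootY k Q q) ^ k) / (1 - rootY k Q q) := by
  unfold rootY
  set g : ℝ → ℝ := fun x => Q * ∑ i ∈ Finset.range k, x ^ i with hg
  have hgc : ContinuousOn g (Set.Icc 0 1) := by
    apply Continuous.continuousOn; fun_prop
  have hg0 : g 0 = Q := by
    simp only [hg]
    rw [zero_geom_sum, if_neg (by omega : ¬ k = 0), mul_one]
  have hg1 : g 1 = (k : ℝ) * Q := by
    simp [hg]; ring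
  have hmono : StrictMonoOn g (Set.Icc 0 1) := by
    intro x hx y hy hxy
    have : ∑ i ∈ Finset.range k, x ^ i < ∑ i ∈ Finset.range k, y ^ i := by
      apply Finset.sum_lt_sum
      · intro i _
        exact pow_le_pow_left₀ hx.1 hxy.le i
      · exact ⟨1, Finset.mem_range.2 (by omega), by simpa using hxy⟩
    exact mul_lt_mul_of_pos_left this hQ0
  obtain ⟨x, hx, hgx⟩ := intermediate_value_Icc (zero_le_one) hgc
    (by rw [hg0, hg1]; exact ⟨h1.le, h2k.le⟩ : q ∈ Set.Icc (g 0) (g 1))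
  have hx0 : x ≠ 0 := by rintro rfl; rw [hg0] at hgx; exact absurd hgx.symm h1.ne'
  have hx1 : x ≠ 1 := by rintro rfl; rw [hg1] at hgx; exact absurd hgx.symm h2k.ne
  have hxIoo : x ∈ Set.Ioo (0:ℝ) 1 := ⟨hx.1.lt_of_ne (Ne.symm hx0), hx.2.lt_of_ne hx1⟩
  have key : ∀ y : ℝ, y ∈ Set.Ioo (0:ℝ) 1 → (Q * (1 - y ^ k) / (1 - y) = g y) := by
    intro y hy
    have h1y : y ≠ 1 := hy.2.ne
    show _ = Q * ∑ i ∈ Finset.range k, y ^ i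
    have h1y' : (1:ℝ) - y ≠ 0 := sub_ne_zero.2 (Ne.symm h1y)
    have h1y'' : y - 1 ≠ 0 := sub_ne_zero.2 h1y
    rw [geom_sum_eq h1y k]
    field_simp
    ring
  have hset : {y : ℝ | y ∈ Set.Ioo (0 : ℝ) 1 ∧ q = Q * (1 - y ^ k) / (1 - y)} = {x} := by
    ext y
    simp only [Set.mem_setOf_eq, Set.mem_singleton_iff]
    constructor
    · rintro ⟨hyI, hyq⟩
      rw [key y hyI] at hyq
      exact hmono.injOn (Set.mem_Icc_of_Ioo hyI) hx (by rw [← hyq, hgx])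
    · rintro rfl
      exact ⟨hxIoo, by rw [key y hxIoo, hgx]⟩
  rw [hset, csSup_singleton]
  exact ⟨hxIoo, by rw [key x hxIoo, hgx]⟩


lemma wt_le {k : ℕ} (u : Fin k → Bool) : wt u ≤ k := by
  simpa [wt] using Finset.card_filter_le Finset.univ (fun i => u i = true)

lemma wt_zero {k : ℕ} : wt (fun _ : Fin k => false) = 0 := by
  simp [wt]

lemma prod_ite_wt {k : ℕ} (a b : ℝ) (u : Fin k → Bool) :
    (∏ i : Fin k, (if u i then a else b)) = a ^ wt u * b ^ (k - wt u) := by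
  rw [Finset.prod_ite (f := fun _ => a) (g := fun _ => b), Finset.prod_const, Finset.prod_const]
  have hcard : (Finset.univ.filter fun i => ¬ (u i = true)).card = k - wt u := by
    have := Finset.card_filter_add_card_filter_not (s := (Finset.univ : Finset (Fin k)))
      (p := fun i => u i = true)
    simp only [Finset.card_univ, Fintype.card_fin] at this
    unfold wt
    omega
  rw [hcard]
  rfl

lemma sum_pi_bool {k : ℕ} (g : Fin k → Bool → ℝ) :
    ∑ u : Fin k → Bool, ∏ i, g i (u i) = ∏ i, (g i false + g i true) := by
  rw [← Fintype.prod_sum]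
  congr 1; ext i
  simp [add_comm]

lemma sum_all {k : ℕ} (a b : ℝ) :
    ∑ u : Fin k → Bool, a ^ wt u * b ^ (k - wt u) = (a + b) ^ k := by
  have := sum_pi_bool (k := k) (fun _ s => if s then a else b)
  simp only [prod_ite_wt] at this
  rw [this]
  simp [add_comm b a]

lemma sum_marg {k : ℕ} (a b : ℝ) (i : Fin k) :
    ∑ u ∈ Finset.univ.filter (fun u : Fin k → Bool => u i = true),
      a ^ wt u * b ^ (k - wt u) = a * (a + b) ^ (k - 1) := by
  classical
  set g : Fin k → Bool → ℝ := fun j s => if s then a else (if j = i then 0 else b) with hgdef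
  have hterm : ∀ u : Fin k → Bool,
      (∏ j, g j (u j)) = if u i = true then a ^ wt u * b ^ (k - wt u) else 0 := by
    intro u
    by_cases hui : u i = true
    · rw [if_pos hui, ← prod_ite_wt a b u]
      apply Finset.prod_congr rfl
      intro j _
      by_cases hj : j = i
      · subst hj; simp [hgdef, hui]
      · simp [hgdef, hj]
    · rw [if_neg hui]
      apply Finset.prod_eq_zero (Finset.mem_univ i)
      simp [hgdef, Bool.not_eq_true] at hui ⊢
      simp [hui]
  have : ∑ u : Fin k → Bool, ∏ j, g j (u j)
      = ∑ u ∈ Finset.univ.filter (fun u : Fin k → Bool => u i = true),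
          a ^ wt u * b ^ (k - wt u) := by
    rw [Finset.sum_filter]
    exact Finset.sum_congr rfl fun u _ => hterm u
  rw [← this, sum_pi_bool]
  rw [← Finset.prod_erase_mul _ _ (Finset.mem_univ i)]
  have h1 : g i false + g i true = a := by simp [hgdef]
  have h2 : ∀ j ∈ Finset.univ.erase i, g j false + g j true = b + a := by
    intro j hj
    have := Finset.ne_of_mem_erase hj
    simp [hgdef, this]
  rw [h1, Finset.prod_congr rfl h2, Finset.prod_const]
  have : (Finset.univ.erase i).card = k - 1 := by
    rw [Finset.card_erase_of_mem (Finset.mem_univ i)]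
    simp
  rw [this, mul_comm, add_comm b a]


/-- the extremal distribution
`ρ*(0…0) = 1−q`, `ρ*(u) = (Q/(1−y))·(1−y)^{w(u)}·y^{k−w(u)}` for `u ≠ 0…0`
(`y = y(k,Q,q)`) satisfies the constraints `Σ ρ(u) = 1`, `ρ(0…0) = 1−q`,
`Σ_{u : u_i = 1} ρ(u) = Q` for all `i`, attains `F(ρ*) = A(k,Q,q)`, and minimizes
`F(ρ) = Σ ρ(u) log₂ ρ(u) + k·h(Q)` among all `ρ : {0,1}^k → (0,1)` satisfying these
constraints, with equality only at `ρ = ρ*`. -/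
theorem stmt_17 (k : ℕ) (hk : 2 ≤ k) (Q q : ℝ) (hQ0 : 0 < Q) (hQ1 : Q < 1)
    (h1 : Q < q) (h2 : q < min 1 ((k : ℝ) * Q))
    (F : ((Fin k → Bool) → ℝ) → ℝ)
    (hF : ∀ ρ : (Fin k → Bool) → ℝ,
      F ρ = (∑ u : Fin k → Bool, ρ u * Real.logb 2 (ρ u)) + (k : ℝ) * binH Q)
    (ρstar : (Fin k → Bool) → ℝ)
    (hρstar : ∀ u : Fin k → Bool,
      ρstar u = if u = (fun _ => false) then 1 - q
        else Q / (1 - rootY k Q q) * (1 - rootY k Q q) ^ wt u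
              * rootY k Q q ^ (k - wt u)) :
    ((∀ u, ρstar u ∈ Set.Ioo (0 : ℝ) 1) ∧
      (∑ u : Fin k → Bool, ρstar u) = 1 ∧
      ρstar (fun _ => false) = 1 - q ∧
      (∀ i : Fin k,
        ∑ u ∈ Finset.univ.filter (fun u : Fin k → Bool => u i = true), ρstar u = Q)) ∧
    F ρstar = funA k Q q ∧
    (∀ ρ : (Fin k → Bool) → ℝ,
      (∀ u, ρ u ∈ Set.Ioo (0 : ℝ) 1) →
      (∑ u : Fin k → Bool, ρ u) = 1 →
      ρ (fun _ => false) = 1 - q →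
      (∀ i : Fin k,
        ∑ u ∈ Finset.univ.filter (fun u : Fin k → Bool => u i = true), ρ u = Q) →
      funA k Q q ≤ F ρ ∧ (F ρ = funA k Q q → ρ = ρstar)) := by
  classical
  have hq1 : q < 1 := lt_of_lt_of_le h2 (min_le_left _ _)
  have hqk : q < (k : ℝ) * Q := lt_of_lt_of_le h2 (min_le_right _ _)
  have hq0 : 0 < q := hQ0.trans h1
  have h1q : 0 < 1 - q := by linarith
  obtain ⟨hyI, hyq⟩ := rootY_spec k hk Q q hQ0 h1 hqk
  set y := rootY k Q q with hy_def
  obtain ⟨hy0, hy1⟩ := hyI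
  have h1y : 0 < 1 - y := by linarith
  have hyk : y ^ k < 1 := pow_lt_one₀ hy0.le hy1 (by omega)
  have hyk0 : 0 < y ^ k := pow_pos hy0 k
  have hqy : q * (1 - y) = Q * (1 - y ^ k) := by
    rw [hyq]; field_simp
  set u₀ : Fin k → Bool := fun _ => false with hu₀
  set c : ℝ := Q / (1 - y) with hc_def
  have hc : 0 < c := div_pos hQ0 h1y
  have hρ0 : ρstar u₀ = 1 - q := by rw [hρstar]; simp
  have hstar_ne : ∀ u : Fin k → Bool, u ≠ u₀ →
      ρstar u = c * (1 - y) ^ wt u * y ^ (k - wt u) := by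
    intro u hu; rw [hρstar u, if_neg hu]
  have hstar_pos : ∀ u, 0 < ρstar u := by
    intro u
    by_cases hu : u = u₀
    · rw [hu, hρ0]; exact h1q
    · rw [hstar_ne u hu]
      positivity
  -- value of c * (1 - y^k)
  have hcq : c * (1 - y ^ k) = q := by
    rw [hc_def, div_mul_eq_mul_div, eq_comm, eq_div_iff h1y.ne']
    linarith [hqy]
  have hcy : c * (1 - y) = Q := by
    rw [hc_def]; field_simp
  -- total sum of ρstar
  have hone : (1 - y) + y = 1 := by ring
  have hsum_star : (∑ u : Fin k → Bool, ρstar u) = 1 := by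
    rw [← Finset.add_sum_erase _ _ (Finset.mem_univ u₀), hρ0]
    have : ∑ u ∈ Finset.univ.erase u₀, ρstar u
        = ∑ u ∈ Finset.univ.erase u₀, c * ((1 - y) ^ wt u * y ^ (k - wt u)) := by
      refine Finset.sum_congr rfl fun u hu => ?_
      rw [hstar_ne u (Finset.ne_of_mem_erase hu)]; ring
    rw [this, ← Finset.mul_sum]
    have herase : ∑ u ∈ Finset.univ.erase u₀, (1 - y) ^ wt u * y ^ (k - wt u)
        = 1 - y ^ k := by
      have h := Finset.add_sum_erase _ (fun u : Fin k → Bool => (1 - y) ^ wt u * y ^ (k - wt u))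
        (Finset.mem_univ u₀)
      beta_reduce at h
      rw [sum_all, hone, one_pow] at h
      have h0 : (1 - y) ^ wt u₀ * y ^ (k - wt u₀) = y ^ k := by
        rw [hu₀, wt_zero]; simp
      linarith [h, h0]
    rw [herase, hcq]; ring
  -- marginals of ρstar
  have hmarg_star : ∀ i : Fin k,
      ∑ u ∈ Finset.univ.filter (fun u : Fin k → Bool => u i = true), ρstar u = Q := by
    intro i
    have : ∑ u ∈ Finset.univ.filter (fun u : Fin k → Bool => u i = true), ρstar u
        = ∑ u ∈ Finset.univ.filter (fun u : Fin k → Bool => u i = true),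
            c * ((1 - y) ^ wt u * y ^ (k - wt u)) := by
      refine Finset.sum_congr rfl fun u hu => ?_
      have hui : u i = true := (Finset.mem_filter.1 hu).2
      have hne : u ≠ u₀ := by
        intro h; rw [h, hu₀] at hui; exact Bool.false_ne_true hui
      rw [hstar_ne u hne]; ring
    rw [this, ← Finset.mul_sum]
    have := sum_marg (k := k) (1 - y) y i
    rw [hone, one_pow, mul_one] at this
    rw [this, hcy]
  -- ρstar ∈ Ioo 0 1
  have hstar_Ioo : ∀ u, ρstar u ∈ Set.Ioo (0 : ℝ) 1 := by
    intro u
    refine ⟨hstar_pos u, ?_⟩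
    obtain ⟨v, hv⟩ := Fintype.exists_ne_of_one_lt_card
      (by simp only [Fintype.card_fun, Fintype.card_bool, Fintype.card_fin]
          exact Nat.one_lt_two_pow (by omega)) u
    calc ρstar u < ∑ w : Fin k → Bool, ρstar w :=
          Finset.single_lt_sum hv (Finset.mem_univ u) (Finset.mem_univ v)
            (hstar_pos v) (fun w _ _ => (hstar_pos w).le)
      _ = 1 := hsum_star
  -- logb values
  set L0 : ℝ := Real.logb 2 c with hL0
  set L1 : ℝ := Real.logb 2 (1 - y) with hL1
  set L2 : ℝ := Real.logb 2 y with hL2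
  have hlogb_star : ∀ u : Fin k → Bool, u ≠ u₀ →
      Real.logb 2 (ρstar u) = L0 + (wt u : ℝ) * L1 + ((k : ℝ) - (wt u : ℝ)) * L2 := by
    intro u hu
    rw [hstar_ne u hu,
      Real.logb_mul (mul_ne_zero hc.ne' (pow_pos h1y _).ne') (pow_pos hy0 _).ne',
      Real.logb_mul hc.ne' (pow_pos h1y _).ne', Real.logb_pow, Real.logb_pow,
      Nat.cast_sub (wt_le u)]
  -- the key linear functional
  have hkey : ∀ ρ : (Fin k → Bool) → ℝ,
      (∑ u : Fin k → Bool, ρ u) = 1 → ρ u₀ = 1 - q →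
      (∀ i : Fin k, ∑ u ∈ Finset.univ.filter (fun u : Fin k → Bool => u i = true), ρ u = Q) →
      ∑ u : Fin k → Bool, ρ u * Real.logb 2 (ρstar u)
        = (1 - q) * Real.logb 2 (1 - q) + q * L0 + ((k : ℝ) * Q) * L1
            + ((k : ℝ) * q - (k : ℝ) * Q) * L2 := by
    intro ρ htot h0 hm
    have hB : ∑ u : Fin k → Bool, ρ u * (wt u : ℝ) = (k : ℝ) * Q := by
      have hwt : ∀ u : Fin k → Bool,
          ((wt u : ℕ) : ℝ) = ∑ i : Fin k, (if u i = true then (1 : ℝ) else 0) := by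
        intro u
        rw [wt, Finset.card_filter]
        push_cast
        rfl
      calc ∑ u : Fin k → Bool, ρ u * (wt u : ℝ)
          = ∑ u : Fin k → Bool, ∑ i : Fin k, ρ u * (if u i = true then (1 : ℝ) else 0) := by
            refine Finset.sum_congr rfl fun u _ => ?_
            rw [hwt, Finset.mul_sum]
        _ = ∑ i : Fin k, ∑ u : Fin k → Bool, ρ u * (if u i = true then (1 : ℝ) else 0) :=
            Finset.sum_comm
        _ = ∑ _i : Fin k, Q := by
            refine Finset.sum_congr rfl fun i _ => ?_
            rw [← hm i, Finset.sum_filter]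
            refine Finset.sum_congr rfl fun u _ => ?_
            by_cases h : u i = true <;> simp [h]
        _ = (k : ℝ) * Q := by simp [mul_comm]
    have hA : ∑ u ∈ Finset.univ.erase u₀, ρ u = q := by
      have h := Finset.add_sum_erase _ ρ (Finset.mem_univ u₀)
      beta_reduce at h
      rw [htot, h0] at h
      linarith
    have hBe : ∑ u ∈ Finset.univ.erase u₀, ρ u * (wt u : ℝ) = (k : ℝ) * Q := by
      have h := Finset.add_sum_erase _ (fun u : Fin k → Bool => ρ u * (wt u : ℝ))
        (Finset.mem_univ u₀)
      beta_reduce at h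
      rw [hB] at h
      have hwt0 : wt u₀ = 0 := by rw [hu₀]; exact wt_zero
      rw [hwt0] at h
      simp only [Nat.cast_zero, mul_zero, zero_add] at h
      linarith [h]
    calc ∑ u : Fin k → Bool, ρ u * Real.logb 2 (ρstar u)
        = ρ u₀ * Real.logb 2 (ρstar u₀)
            + ∑ u ∈ Finset.univ.erase u₀, ρ u * Real.logb 2 (ρstar u) :=
          (Finset.add_sum_erase _ _ (Finset.mem_univ u₀)).symm
      _ = (1 - q) * Real.logb 2 (1 - q)
            + ∑ u ∈ Finset.univ.erase u₀,
                (L0 * ρ u + L1 * (ρ u * (wt u : ℝ)) + L2 * ((k : ℝ) * ρ u - ρ u * (wt u : ℝ))) := by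
          rw [h0, hρ0]
          congr 1
          refine Finset.sum_congr rfl fun u hu => ?_
          rw [hlogb_star u (Finset.ne_of_mem_erase hu)]
          ring
      _ = (1 - q) * Real.logb 2 (1 - q)
            + (L0 * q + L1 * ((k : ℝ) * Q) + L2 * ((k : ℝ) * q - (k : ℝ) * Q)) := by
          congr 1
          rw [Finset.sum_add_distrib, Finset.sum_add_distrib, ← Finset.mul_sum, ← Finset.mul_sum,
            ← Finset.mul_sum, hA, hBe, Finset.sum_sub_distrib, ← Finset.mul_sum, hA, hBe]
      _ = _ := by ring
    done
  -- funA in terms of the L's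
  have hfunA : funA k Q q
      = (1 - q) * Real.logb 2 (1 - q) + q * L0 + ((k : ℝ) * Q) * L1
          + ((k : ℝ) * q - (k : ℝ) * Q) * L2 + (k : ℝ) * binH Q := by
    have hA1 : Real.logb 2 (Q * y ^ k / (1 - y))
        = Real.logb 2 Q + (k : ℝ) * L2 - L1 := by
      rw [Real.logb_div (mul_ne_zero hQ0.ne' hyk0.ne') h1y.ne',
        Real.logb_mul hQ0.ne' hyk0.ne', Real.logb_pow]
    have hA2 : Real.logb 2 ((1 - y) / y) = L1 - L2 :=
      Real.logb_div h1y.ne' hy0.ne'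
    have hA0 : L0 = Real.logb 2 Q - L1 := by
      rw [hL0, hc_def, Real.logb_div hQ0.ne' h1y.ne']
    rw [funA, ← hy_def, hA1, hA2, hA0]
    ring
  have hFstar : F ρstar = funA k Q q := by
    rw [hF, hkey ρstar hsum_star hρ0 hmarg_star, hfunA]
  refine ⟨⟨hstar_Ioo, hsum_star, hρ0, hmarg_star⟩, hFstar, ?_⟩
  -- the minimization part
  intro ρ hIoo htot h0 hm
  have hpos : ∀ u, 0 < ρ u := fun u => (hIoo u).1
  have hkeyρ : ∑ u : Fin k → Bool, ρ u * Real.logb 2 (ρstar u)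
      = (1 - q) * Real.logb 2 (1 - q) + q * L0 + ((k : ℝ) * Q) * L1
          + ((k : ℝ) * q - (k : ℝ) * Q) * L2 := hkey ρ htot h0 hm
  have hfunA2 : funA k Q q
      = (∑ u : Fin k → Bool, ρ u * Real.logb 2 (ρstar u)) + (k : ℝ) * binH Q := by
    rw [hkeyρ, hfunA]
  -- pointwise Gibbs bound
  have hptwise : ∀ u : Fin k → Bool,
      ρ u * (Real.log (ρstar u) - Real.log (ρ u)) ≤ ρstar u - ρ u := by
    intro u
    have hd : 0 < ρstar u / ρ u := div_pos (hstar_pos u) (hpos u)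
    have h := Real.log_le_sub_one_of_pos hd
    rw [Real.log_div (hstar_pos u).ne' (hpos u).ne'] at h
    have := mul_le_mul_of_nonneg_left h (hpos u).le
    calc ρ u * (Real.log (ρstar u) - Real.log (ρ u))
        ≤ ρ u * (ρstar u / ρ u - 1) := this
      _ = ρstar u - ρ u := by
          rw [mul_sub, mul_one, mul_comm, div_mul_cancel₀ _ (hpos u).ne']
  have hsumdiff : ∑ u : Fin k → Bool, (ρstar u - ρ u) = 0 := by
    rw [Finset.sum_sub_distrib, hsum_star, htot]; ring
  have hgibbs : ∑ u : Fin k → Bool, ρ u * (Real.log (ρstar u) - Real.log (ρ u)) ≤ 0 := by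
    calc ∑ u : Fin k → Bool, ρ u * (Real.log (ρstar u) - Real.log (ρ u))
        ≤ ∑ u : Fin k → Bool, (ρstar u - ρ u) :=
          Finset.sum_le_sum fun u _ => hptwise u
      _ = 0 := hsumdiff
  have hlog2 : (0 : ℝ) < Real.log 2 := Real.log_pos (by norm_num)
  have hlogbdiff : ∑ u : Fin k → Bool, ρ u * Real.logb 2 (ρstar u)
        - ∑ u : Fin k → Bool, ρ u * Real.logb 2 (ρ u)
      = (∑ u : Fin k → Bool, ρ u * (Real.log (ρstar u) - Real.log (ρ u))) / Real.log 2 := by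
    rw [← Finset.sum_sub_distrib, Finset.sum_div]
    refine Finset.sum_congr rfl fun u _ => ?_
    rw [Real.logb, Real.logb]
    field_simp
  have hle : ∑ u : Fin k → Bool, ρ u * Real.logb 2 (ρstar u)
      ≤ ∑ u : Fin k → Bool, ρ u * Real.logb 2 (ρ u) := by
    have := div_nonpos_of_nonpos_of_nonneg hgibbs hlog2.le
    rw [← hlogbdiff] at this
    linarith
  constructor
  · rw [hF, hfunA2]
    linarith
  · intro hFeq
    rw [hF, hfunA2] at hFeq
    have hsums : ∑ u : Fin k → Bool, ρ u * Real.logb 2 (ρ u)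
        = ∑ u : Fin k → Bool, ρ u * Real.logb 2 (ρstar u) := by linarith
    have hzero : ∑ u : Fin k → Bool, ρ u * (Real.log (ρstar u) - Real.log (ρ u)) = 0 := by
      have h' : (∑ u : Fin k → Bool, ρ u * (Real.log (ρstar u) - Real.log (ρ u))) / Real.log 2
          = 0 := by rw [← hlogbdiff]; linarith
      field_simp at h'
      rw [mul_zero] at h'
      exact h'
    have heach : ∀ u ∈ Finset.univ, (ρstar u - ρ u) - ρ u * (Real.log (ρstar u) - Real.log (ρ u)) = 0 := by
      apply (Finset.sum_eq_zero_iff_of_nonneg (fun u _ => sub_nonneg.2 (hptwise u))).1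
      rw [Finset.sum_sub_distrib, hsumdiff, hzero]
      ring
    funext u
    have hu := heach u (Finset.mem_univ u)
    by_contra hne
    have hdne : ρstar u / ρ u ≠ 1 := by
      intro h
      exact hne ((div_eq_one_iff_eq (hpos u).ne').1 h).symm
    have hstrict := Real.log_lt_sub_one_of_pos (div_pos (hstar_pos u) (hpos u)) hdne
    rw [Real.log_div (hstar_pos u).ne' (hpos u).ne'] at hstrict
    have := mul_lt_mul_of_pos_left hstrict (hpos u)
    have heqr : ρ u * (ρstar u / ρ u - 1) = ρstar u - ρ u := by
      rw [mul_sub, mul_one, mul_comm, div_mul_cancel₀ _ (hpos u).ne']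
    rw [heqr] at this
    linarith
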